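/- arXiv:2401.14803 — 3 statements merged into one kernel-verified Lean document; each statement's English description precedes it below -/
import Mathlib

section
/- Let G be an amenable finitely generated group with exponential growth. Then G does not have the Rapid Decay property. -/
open scoped BigOperators

/-- Word length of `g` with respect to a generating set `S`. -/
noncomputable def wordLength {G : Type*} [Group G] (S : Set G) (g : G) : ℕ :=
  sInf {n : ℕ | ∃ l : List G, (∀ x ∈ l, x ∈ S ∨ x⁻¹ ∈ S) ∧ l.length = n ∧ l.prod = g}

/-- Convolution of finitely supported functions. -/
noncomputable def conv {G : Type*} [Group G] (f g : G →₀ ℝ) : G → ℝ :=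
  fun γ => ∑ μ ∈ f.support, f μ * g (μ⁻¹ * γ)

/-- The ℓ²-norm. -/
noncomputable def l2norm {G : Type*} (f : G → ℝ) : ℝ :=
  Real.sqrt (∑' x, f x ^ 2)

/-- The ℓ¹-norm of a finitely supported function. -/
noncomputable def l1norm {G : Type*} (f : G →₀ ℝ) : ℝ :=
  ∑ x ∈ f.support, |f x|

/-- Operator norm of left convolution by `f` on `ℓ²(G)`. -/
noncomputable def opNorm {G : Type*} [Group G] (f : G →₀ ℝ) : ℝ :=
  sSup {x : ℝ | ∃ g : G →₀ ℝ, (∀ γ, 0 ≤ g γ) ∧ l2norm (g : G → ℝ) ≤ 1 ∧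
    x = l2norm (conv f g)}

/-- An amenable finitely generated group of exponential growth does not have the Rapid
Decay property.  Amenability is used via Leptin's characterization: `‖f‖_* = ‖f‖₁`
for nonnegative finitely supported `f`. -/
theorem stmt14 {G : Type*} [Group G] (S : Set G) (hSfin : S.Finite)
    (hSgen : Subgroup.closure S = ⊤)
    (hLeptin : ∀ f : G →₀ ℝ, (∀ x, 0 ≤ f x) → opNorm f = l1norm f)
    (hexp : ∃ a : ℝ, 1 < a ∧ ∀ n : ℕ, 1 ≤ n →
      a ^ n ≤ (Nat.card {g : G | wordLength S g ≤ n} : ℝ)) :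
    ¬ ∃ P : Polynomial ℝ, ∀ r : ℝ, 0 < r → ∀ f : G →₀ ℝ, (∀ x, 0 ≤ f x) →
      (∀ x ∈ f.support, (wordLength S x : ℝ) ≤ r) →
      opNorm f ≤ P.eval r * l2norm (f : G → ℝ) := by
  classical
  rintro ⟨P, hP⟩
  obtain ⟨a, ha, hgrow⟩ := hexp
  -- Key estimate: for every n ≥ 1, a^n ≤ (P.eval n)^2
  have key : ∀ n : ℕ, 1 ≤ n → a ^ n ≤ (P.eval (n : ℝ)) ^ 2 := by
    intro n hn
    have hapos : (0 : ℝ) < a ^ n := pow_pos (by linarith) n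
    have hcard := hgrow n hn
    -- the ball is finite
    have hfin : {g : G | wordLength S g ≤ n}.Finite := by
      by_contra h
      haveI : Infinite {g : G | wordLength S g ≤ n} := Set.infinite_coe_iff.mpr h
      rw [Nat.card_eq_zero_of_infinite] at hcard
      simp only [Nat.cast_zero] at hcard
      linarith
    set B : Finset G := hfin.toFinset with hB
    have hNB : (Nat.card {g : G | wordLength S g ≤ n} : ℝ) = (B.card : ℝ) := by
      rw [Nat.card_coe_set_eq, Set.ncard_eq_toFinset_card _ hfin]
    set N : ℝ := (B.card : ℝ) with hNdef
    have hN1 : 1 ≤ N := by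
      rw [← hNB]
      calc (1:ℝ) ≤ a ^ n := one_le_pow₀ (le_of_lt ha)
      _ ≤ _ := hcard
    have hN0 : 0 ≤ N := by linarith
    -- the indicator function
    set f : G →₀ ℝ := Finsupp.indicator B (fun _ _ => (1:ℝ)) with hfdef
    have happly : ∀ x, f x = if x ∈ B then 1 else 0 := by
      intro x
      rw [hfdef, Finsupp.indicator_apply, dite_eq_ite]
    have hf0 : ∀ x, 0 ≤ f x := by
      intro x; rw [happly]; split <;> norm_num
    have hsupp : f.support = B := by
      ext x
      simp only [Finsupp.mem_support_iff, happly]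
      by_cases h : x ∈ B <;> simp [h]
    have hl1 : l1norm f = N := by
      rw [l1norm, hsupp, hNdef]
      rw [Finset.sum_congr rfl (fun x hx => show |f x| = 1 by rw [happly, if_pos hx]; norm_num)]
      simp
    have hl2sq : (∑' x, (f : G → ℝ) x ^ 2) = N := by
      rw [tsum_eq_sum (s := B) (fun x hx => by rw [happly, if_neg hx]; norm_num)]
      rw [Finset.sum_congr rfl (fun x hx => show (f x)^2 = 1 by rw [happly, if_pos hx]; norm_num)]
      simp [hNdef]
    have hl2 : l2norm (f : G → ℝ) = Real.sqrt N := by rw [l2norm, hl2sq]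
    have hrd := hP (n : ℝ) (by exact_mod_cast Nat.lt_of_lt_of_le Nat.zero_lt_one hn) f hf0
      (by intro x hx
          rw [hsupp, hB, Set.Finite.mem_toFinset] at hx
          exact_mod_cast hx)
    rw [hLeptin f hf0, hl1, hl2] at hrd
    have hsq1 : 1 ≤ Real.sqrt N := by
      rw [show (1:ℝ) = Real.sqrt 1 by simp]
      exact Real.sqrt_le_sqrt hN1
    have hsqpos : 0 < Real.sqrt N := by linarith
    have hNsq : Real.sqrt N * Real.sqrt N = N := Real.mul_self_sqrt hN0
    have hsqle : Real.sqrt N ≤ P.eval (n : ℝ) := by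
      nlinarith
    calc a ^ n ≤ N := hNB ▸ hcard
      _ = Real.sqrt N * Real.sqrt N := hNsq.symm
      _ ≤ P.eval (n:ℝ) ^ 2 := by nlinarith
  -- polynomial cannot dominate exponential
  have hbigO : (fun n : ℕ => (P*P).eval (n:ℝ)) =O[Filter.atTop]
      (fun n : ℕ => (n:ℝ) ^ (P*P).natDegree) := by
    have h1 : (fun x : ℝ => (P*P).eval x) =O[Filter.atTop]
        (fun x : ℝ => Polynomial.eval x (Polynomial.X ^ (P*P).natDegree : Polynomial ℝ)) := by
      apply Polynomial.isBigO_of_degree_le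
      rw [Polynomial.degree_X_pow]
      exact Polynomial.degree_le_natDegree
    have := h1.comp_tendsto (tendsto_natCast_atTop_atTop (R := ℝ))
    simpa [Function.comp_def] using this
  have hlo : (fun n : ℕ => (P*P).eval (n:ℝ)) =o[Filter.atTop] (fun n : ℕ => a ^ n) :=
    hbigO.trans_isLittleO (isLittleO_pow_const_const_pow_of_one_lt _ ha)
  have := (hlo.bound (by norm_num : (0:ℝ) < 1/2)).and (Filter.eventually_atTop.2 ⟨1, fun n hn => key n hn⟩)
  obtain ⟨n, hn⟩ := Filter.eventually_atTop.1 this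
  obtain ⟨h1, h2⟩ := hn (max n 1) (le_max_left _ _)
  have hapos : (0 : ℝ) < a ^ (max n 1) := pow_pos (by linarith) _
  rw [Real.norm_eq_abs, Real.norm_eq_abs, abs_of_pos hapos] at h1
  have : a ^ (max n 1) ≤ (P.eval ((max n 1 : ℕ):ℝ))^2 := h2
  have heq : (P*P).eval ((max n 1 : ℕ):ℝ) = (P.eval ((max n 1 : ℕ):ℝ))^2 := by
    simp [sq]
  nlinarith [abs_nonneg ((P*P).eval ((max n 1 : ℕ):ℝ)), le_abs_self ((P*P).eval ((max n 1 : ℕ):ℝ))]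
end

section
/- Let N be a finitely generated group and α an automorphism of N of polynomial growth, i.e. there is a polynomial P with L_N(αⁿ(x)) ≤ P(n)·L_N(x) for all x ∈ N and n ∈ ℤ, where L_N is word length. If N has polynomial growth, then the semidirect product N ⋊_α ℤ has polynomial growth. -/
open Polynomial in
noncomputable def polyAbs (P : Polynomial ℝ) : Polynomial ℝ :=
  ∑ i ∈ Finset.range (P.natDegree + 1), Polynomial.C |P.coeff i| * Polynomial.X ^ i

lemma polyAbs_eval (P : Polynomial ℝ) (x : ℝ) :
    (polyAbs P).eval x = ∑ i ∈ Finset.range (P.natDegree + 1), |P.coeff i| * x ^ i := by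
  simp [polyAbs, Polynomial.eval_finset_sum]

lemma polyAbs_nonneg (P : Polynomial ℝ) {x : ℝ} (hx : 0 ≤ x) : 0 ≤ (polyAbs P).eval x := by
  rw [polyAbs_eval]
  exact Finset.sum_nonneg fun i _ => mul_nonneg (abs_nonneg _) (pow_nonneg hx i)

lemma eval_le_polyAbs (P : Polynomial ℝ) {x : ℝ} (hx : 0 ≤ x) : P.eval x ≤ (polyAbs P).eval x := by
  rw [polyAbs_eval, Polynomial.eval_eq_sum_range]
  refine Finset.sum_le_sum fun i _ => ?_
  calc P.coeff i * x ^ i ≤ |P.coeff i * x ^ i| := le_abs_self _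
    _ = |P.coeff i| * x ^ i := by rw [abs_mul, abs_pow, abs_of_nonneg hx]

lemma polyAbs_mono (P : Polynomial ℝ) {x y : ℝ} (hx : 0 ≤ x) (hxy : x ≤ y) :
    (polyAbs P).eval x ≤ (polyAbs P).eval y := by
  rw [polyAbs_eval, polyAbs_eval]
  exact Finset.sum_le_sum fun i _ =>
    mul_le_mul_of_nonneg_left (pow_le_pow_left₀ hx hxy i) (abs_nonneg _)

lemma wordLength_exists_list {G : Type*} [Group G] {S : Set G} (hS : Subgroup.closure S = ⊤)
    (g : G) : ∃ l : List G, (∀ x ∈ l, x ∈ S ∨ x⁻¹ ∈ S) ∧ l.length = wordLength S g ∧ l.prod = g := by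
  have hg : g ∈ Submonoid.closure (S ∪ S⁻¹) := by
    rw [← Subgroup.closure_toSubmonoid, hS]; trivial
  obtain ⟨l, hl, hp⟩ := Submonoid.exists_list_of_mem_closure hg
  have hne : {n : ℕ | ∃ l : List G, (∀ x ∈ l, x ∈ S ∨ x⁻¹ ∈ S) ∧ l.length = n ∧ l.prod = g}.Nonempty :=
    ⟨l.length, l, fun x hx => by
      rcases hl x hx with h | h
      · exact Or.inl h
      · exact Or.inr (by simpa using h), rfl, hp⟩
  obtain ⟨l', h1, h2, h3⟩ := Nat.sInf_mem hne
  exact ⟨l', h1, h2, h3⟩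

lemma wordLength_le_length {G : Type*} [Group G] (S : Set G) (l : List G)
    (hl : ∀ x ∈ l, x ∈ S ∨ x⁻¹ ∈ S) : wordLength S l.prod ≤ l.length :=
  Nat.sInf_le ⟨l, hl, rfl, rfl⟩

lemma wordLength_le_one {G : Type*} [Group G] {S : Set G} {s : G} (hs : s ∈ S ∨ s⁻¹ ∈ S) :
    wordLength S s ≤ 1 := by
  simpa using wordLength_le_length S [s] (by simpa using hs)

lemma wordLength_mul_le {G : Type*} [Group G] {S : Set G} (hS : Subgroup.closure S = ⊤)
    (a b : G) : wordLength S (a * b) ≤ wordLength S a + wordLength S b := by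
  obtain ⟨la, h1, h2, h3⟩ := wordLength_exists_list hS a
  obtain ⟨lb, h4, h5, h6⟩ := wordLength_exists_list hS b
  have := wordLength_le_length S (la ++ lb) (by
    intro x hx; rcases List.mem_append.mp hx with h | h
    · exact h1 x h
    · exact h4 x h)
  simpa [h2, h3, h5, h6] using this

lemma wordLength_list_prod_le {G : Type*} [Group G] {S : Set G} (hS : Subgroup.closure S = ⊤) :
    ∀ L : List G, wordLength S L.prod ≤ (L.map (wordLength S)).sum
  | [] => by simpa using wordLength_le_length S ([] : List G) (by simp)
  | (y :: L) => by
    simp only [List.prod_cons, List.map_cons, List.sum_cons]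
    exact le_trans (wordLength_mul_le hS y L.prod)
      (Nat.add_le_add_left (wordLength_list_prod_le hS L) _)

lemma ball_finite {G : Type*} [Group G] {S : Set G} (hSfin : S.Finite)
    (hS : Subgroup.closure S = ⊤) (M : ℕ) : {g : G | wordLength S g ≤ M}.Finite := by
  have hF : (S ∪ S⁻¹).Finite := hSfin.union hSfin.inv
  have hsub : {g : G | wordLength S g ≤ M} ⊆
      (fun l : List G => l.prod) '' {l : List G | (∀ x ∈ l, x ∈ S ∪ S⁻¹) ∧ l.length ≤ M} := by
    intro g hg
    obtain ⟨l, h1, h2, h3⟩ := wordLength_exists_list hS g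
    exact ⟨l, ⟨fun x hx => by
      rcases h1 x hx with h | h
      · exact Or.inl h
      · exact Or.inr (by simpa using h), h2 ▸ hg⟩, h3⟩
  refine Set.Finite.subset (Set.Finite.image _ ?_) hsub
  haveI : Finite ↥(S ∪ S⁻¹) := hF.to_subtype
  have h2 : {l : List G | (∀ x ∈ l, x ∈ S ∪ S⁻¹) ∧ l.length ≤ M} ⊆
      (fun l : List ↥(S ∪ S⁻¹) => l.map Subtype.val) '' {l | l.length ≤ M} := by
    intro l hl
    exact ⟨l.attach.map (fun x => ⟨x.1, hl.1 x.1 x.2⟩), by simpa using hl.2, by simp⟩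
  exact Set.Finite.subset (Set.Finite.image _ (List.finite_length_le _ M)) h2

open SemidirectProduct Multiplicative in

lemma sdp_normal_form {N : Type*} [Group N] (S : Set N) (α : MulAut N) :
    ∀ l : List (SemidirectProduct N (Multiplicative ℤ) (zpowersHom (MulAut N) α)),
      (∀ x ∈ l, x ∈ (SemidirectProduct.inl '' S ∪ {SemidirectProduct.inr (ofAdd (1 : ℤ))}) ∨
        x⁻¹ ∈ (SemidirectProduct.inl '' S ∪ {SemidirectProduct.inr (ofAdd (1 : ℤ))})) →
      (∃ L : List N, (∀ y ∈ L, ∃ s : N, ∃ e : ℤ, (s ∈ S ∨ s⁻¹ ∈ S) ∧ |e| ≤ (l.length : ℤ) ∧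
          y = (α ^ e) s) ∧
        L.length ≤ l.length ∧ L.prod = l.prod.left) ∧
      |toAdd l.prod.right| ≤ (l.length : ℤ)
  | [] => fun _ => by
      refine ⟨⟨[], by simp, by simp, by simp⟩, by simp⟩
  | (a :: l) => fun hmem => by
      obtain ⟨⟨L, hL, hlen, hprod⟩, hright⟩ :=
        sdp_normal_form S α l (fun x hx => hmem x (List.mem_cons_of_mem a hx))
      have ha : (∃ s : N, (s ∈ S ∨ s⁻¹ ∈ S) ∧ a = SemidirectProduct.inl s) ∨
          (∃ ε : ℤ, (ε = 1 ∨ ε = -1) ∧ a = SemidirectProduct.inr (ofAdd ε)) := by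
        rcases hmem a List.mem_cons_self with (⟨s, hs, hsa⟩ | h) | (⟨s, hs, hsa⟩ | h)
        · exact Or.inl ⟨s, Or.inl hs, hsa.symm⟩
        · simp only [Set.mem_singleton_iff] at h
          exact Or.inr ⟨1, Or.inl rfl, h⟩
        · refine Or.inl ⟨s⁻¹, Or.inr (by simpa using hs), ?_⟩
          rw [← inv_inv a, ← hsa, map_inv]
        · simp only [Set.mem_singleton_iff, inv_eq_iff_eq_inv] at h
          refine Or.inr ⟨-1, Or.inr rfl, ?_⟩
          rw [h, ← map_inv]
          rfl
      rcases ha with ⟨s, hs, rfl⟩ | ⟨ε, hε, rfl⟩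
      · refine ⟨⟨s :: L, ?_, ?_, ?_⟩, ?_⟩
        · intro y hy
          rcases List.mem_cons.mp hy with rfl | hy'
          · exact ⟨y, 0, hs, by rw [abs_zero]; positivity, by simp⟩
          · obtain ⟨s', e, h1, h2, h3⟩ := hL y hy'
            exact ⟨s', e, h1, le_trans h2 (by push_cast [List.length_cons]; omega), h3⟩
        · simpa using Nat.succ_le_succ hlen
        · simp [SemidirectProduct.mul_left, hprod]
        · rw [List.prod_cons, SemidirectProduct.mul_right, right_inl, one_mul]
          exact le_trans hright (by push_cast [List.length_cons]; omega)
      · have habs : |ε| = 1 := by rcases hε with rfl | rfl <;> decide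
        refine ⟨⟨L.map ((α ^ ε : MulAut N) : N → N), ?_, ?_, ?_⟩, ?_⟩
        · intro y hy
          obtain ⟨y', hy', rfl⟩ := List.mem_map.mp hy
          obtain ⟨s', e, h1, h2, h3⟩ := hL y' hy'
          refine ⟨s', ε + e, h1, ?_, ?_⟩
          · calc |ε + e| ≤ |ε| + |e| := abs_add_le _ _
              _ ≤ 1 + l.length := by rw [habs]; exact add_le_add_right h2 _
              _ ≤ _ := by push_cast [List.length_cons]; omega
          · rw [h3, zpow_add]
            rfl
        · simpa using Nat.le_succ_of_le hlen
        · rw [List.prod_cons, SemidirectProduct.mul_left, left_inr, one_mul, right_inr]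
          have hz : (zpowersHom (MulAut N) α) (ofAdd ε) = α ^ ε := by
            simp [zpowersHom_apply]
          rw [hz, ← hprod]
          exact (map_list_prod (α ^ ε : MulAut N) L).symm
        · rw [List.prod_cons, SemidirectProduct.mul_right, right_inr]
          calc |toAdd (ofAdd ε * l.prod.right)| = |ε + toAdd l.prod.right| := by
                rw [toAdd_mul, toAdd_ofAdd]
            _ ≤ |ε| + |toAdd l.prod.right| := abs_add_le _ _
            _ ≤ 1 + l.length := by rw [habs]; exact add_le_add_right hright _
            _ ≤ _ := by push_cast [List.length_cons]; omega

/-- If `α` is an automorphism of a finitely generated group `N` whose iterates grow at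
most polynomially, and `N` has polynomial growth, then `N ⋊_α ℤ` has polynomial
growth. -/
theorem stmt16 {N : Type*} [Group N] (S : Set N) (hSfin : S.Finite)
    (hSgen : Subgroup.closure S = ⊤)
    (α : MulAut N)
    (hα : ∃ P : Polynomial ℝ, ∀ (x : N) (n : ℤ),
      (wordLength S ((α ^ n) x) : ℝ) ≤ P.eval ((|n| : ℤ) : ℝ) * (wordLength S x : ℝ))
    (hN : ∃ P : Polynomial ℝ, ∀ n : ℕ,
      (Nat.card {g : N | wordLength S g ≤ n} : ℝ) ≤ P.eval (n : ℝ)) :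
    ∃ P : Polynomial ℝ, ∀ n : ℕ,
      (Nat.card {g : SemidirectProduct N (Multiplicative ℤ) (zpowersHom (MulAut N) α) |
          wordLength
            (SemidirectProduct.inl '' S ∪
              {SemidirectProduct.inr (Multiplicative.ofAdd (1 : ℤ))}) g ≤ n} : ℝ)
        ≤ P.eval (n : ℝ) := by
  classical
  obtain ⟨P, hP⟩ := hα
  obtain ⟨Q, hQ⟩ := hN
  set T : Set (SemidirectProduct N (Multiplicative ℤ) (zpowersHom (MulAut N) α)) :=
    SemidirectProduct.inl '' S ∪ {SemidirectProduct.inr (Multiplicative.ofAdd (1 : ℤ))} with hT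
  have hTgen : Subgroup.closure T = ⊤ := by
    rw [eq_top_iff]
    rintro g -
    rw [← SemidirectProduct.inl_left_mul_inr_right g]
    refine mul_mem ?_ ?_
    · have h1 : (Subgroup.closure S).map SemidirectProduct.inl ≤ Subgroup.closure T := by
        rw [Subgroup.map_le_iff_le_comap, Subgroup.closure_le]
        intro s hs
        exact Subgroup.subset_closure (Or.inl ⟨s, hs, rfl⟩)
      exact h1 ⟨g.left, by rw [hSgen]; trivial, rfl⟩
    · have h2 : SemidirectProduct.inr g.right =
          (SemidirectProduct.inr (Multiplicative.ofAdd (1 : ℤ)) :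
            SemidirectProduct N (Multiplicative ℤ) (zpowersHom (MulAut N) α)) ^
            (Multiplicative.toAdd g.right) := by
        rw [← map_zpow]
        congr 1
        rw [← ofAdd_zsmul (Multiplicative.toAdd g.right) (1 : ℤ), smul_eq_mul, mul_one,
          ofAdd_toAdd]
      rw [h2]
      have ht : (SemidirectProduct.inr (Multiplicative.ofAdd (1 : ℤ)) :
          SemidirectProduct N (Multiplicative ℤ) (zpowersHom (MulAut N) α)) ∈
          Subgroup.closure T :=
        Subgroup.subset_closure (by rw [hT]; exact Or.inr rfl)
      exact Subgroup.zpow_mem _ ht _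
  refine ⟨((polyAbs Q).comp (Polynomial.X * (polyAbs P + 1))) * (2 * Polynomial.X + 1),
    fun n => ?_⟩
  set B : ℝ := (polyAbs P).eval (n : ℝ) with hB
  have hB0 : 0 ≤ B := polyAbs_nonneg P (by positivity)
  set M : ℕ := n * ⌈B⌉₊ with hM
  have hcomp : ∀ g : SemidirectProduct N (Multiplicative ℤ) (zpowersHom (MulAut N) α),
      wordLength T g ≤ n →
      wordLength S g.left ≤ M ∧ |Multiplicative.toAdd g.right| ≤ (n : ℤ) := by
    intro g hg
    obtain ⟨l, hl1, hl2, hl3⟩ := wordLength_exists_list hTgen g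
    have hln : l.length ≤ n := le_trans (le_of_eq hl2) hg
    rw [hT] at hl1
    obtain ⟨⟨L, hL, hLlen, hLprod⟩, hright⟩ := sdp_normal_form S α l hl1
    rw [hl3] at hright hLprod
    constructor
    · -- left bound
      have hentry : ∀ y ∈ L, (wordLength S y : ℝ) ≤ B := by
        intro y hy
        obtain ⟨s, e, hs, he, rfl⟩ := hL y hy
        have h1 := hP s e
        have h2 : (wordLength S s : ℝ) ≤ 1 := by exact_mod_cast wordLength_le_one hs
        have h2' : (0:ℝ) ≤ (wordLength S s : ℝ) := by positivity
        have habsle : ((|e| : ℤ) : ℝ) ≤ (n : ℝ) := by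
          have : |e| ≤ (n : ℤ) := le_trans he (by exact_mod_cast hln)
          exact_mod_cast this
        have habs0 : (0:ℝ) ≤ ((|e| : ℤ) : ℝ) := by positivity
        rcases le_or_gt (P.eval ((|e| : ℤ) : ℝ)) 0 with h | h
        · nlinarith
        · calc (wordLength S ((α ^ e) s) : ℝ) ≤ P.eval ((|e| : ℤ) : ℝ) * wordLength S s := h1
            _ ≤ P.eval ((|e| : ℤ) : ℝ) * 1 := by nlinarith
            _ = P.eval ((|e| : ℤ) : ℝ) := mul_one _
            _ ≤ (polyAbs P).eval ((|e| : ℤ) : ℝ) := eval_le_polyAbs P habs0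
            _ ≤ B := polyAbs_mono P habs0 habsle
      have hsum : ((L.map (wordLength S)).sum : ℝ) ≤ (L.length : ℝ) * B := by
        have hs2 := List.sum_le_card_nsmul (L.map (fun y => (wordLength S y : ℝ))) B (by
          intro x hx
          obtain ⟨y, hy, rfl⟩ := List.mem_map.mp hx
          exact hentry y hy)
        rw [List.length_map] at hs2
        calc ((L.map (wordLength S)).sum : ℝ)
            = (L.map (fun y => (wordLength S y : ℝ))).sum := by
              rw [Nat.cast_list_sum, List.map_map]; rfl
          _ ≤ L.length • B := hs2
          _ = (L.length : ℝ) * B := nsmul_eq_mul _ _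
      have hleft : (wordLength S g.left : ℝ) ≤ (M : ℝ) := by
        have h0 : (wordLength S g.left : ℝ) ≤ ((L.map (wordLength S)).sum : ℝ) := by
          have := wordLength_list_prod_le hSgen L
          rw [hLprod] at this
          exact_mod_cast this
        calc (wordLength S g.left : ℝ) ≤ ((L.map (wordLength S)).sum : ℝ) := h0
          _ ≤ (L.length : ℝ) * B := hsum
          _ ≤ (n : ℝ) * B := by
              have : (L.length : ℝ) ≤ (n : ℝ) := by exact_mod_cast le_trans hLlen hln
              nlinarith
          _ ≤ (n : ℝ) * (⌈B⌉₊ : ℝ) :=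
              mul_le_mul_of_nonneg_left (Nat.le_ceil B) (by positivity)
          _ = (M : ℝ) := by rw [hM]; push_cast; ring
      exact_mod_cast hleft
    · exact le_trans hright (by exact_mod_cast hln)
  have hAfin : {g : N | wordLength S g ≤ M}.Finite := ball_finite hSfin hSgen M
  haveI := hAfin.to_subtype
  haveI := (Set.finite_Icc (-(n : ℤ)) (n : ℤ)).to_subtype
  have hinj : Function.Injective
      (fun g : {g : SemidirectProduct N (Multiplicative ℤ) (zpowersHom (MulAut N) α) |
          wordLength T g ≤ n} =>
        ((⟨g.1.left, (hcomp g.1 g.2).1⟩ : {g : N | wordLength S g ≤ M}),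
         (⟨Multiplicative.toAdd g.1.right,
            Set.mem_Icc.mpr (abs_le.mp (hcomp g.1 g.2).2)⟩ : ↥(Set.Icc (-(n:ℤ)) (n:ℤ))))) := by
    intro g₁ g₂ h
    apply Subtype.ext
    have hl := congrArg (fun p => p.1.1) h
    have hr := congrArg (fun p => p.2.1) h
    simp only at hl hr
    exact SemidirectProduct.ext hl (Multiplicative.toAdd.injective hr)
  have hcard1 : Nat.card {g : SemidirectProduct N (Multiplicative ℤ) (zpowersHom (MulAut N) α) |
      wordLength T g ≤ n} ≤ Nat.card {g : N | wordLength S g ≤ M} * (2 * n + 1) := by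
    have hc := Nat.card_le_card_of_injective _ hinj
    rw [Nat.card_prod] at hc
    have hIcc : Nat.card ↥(Set.Icc (-(n:ℤ)) (n:ℤ)) = 2 * n + 1 := by
      rw [Nat.card_coe_set_eq, ← Finset.coe_Icc, Set.ncard_coe_finset, Int.card_Icc]
      omega
    rwa [hIcc] at hc
  have hQM := hQ M
  have hMR : (M : ℝ) ≤ (n : ℝ) * ((polyAbs P).eval (n : ℝ) + 1) := by
    have hc := (Nat.ceil_lt_add_one hB0).le
    calc (M : ℝ) = (n : ℝ) * (⌈B⌉₊ : ℝ) := by rw [hM]; push_cast; ring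
      _ ≤ (n : ℝ) * (B + 1) := mul_le_mul_of_nonneg_left hc (by positivity)
  have hcard2 : (Nat.card {g : N | wordLength S g ≤ M} : ℝ) ≤
      (polyAbs Q).eval ((n : ℝ) * ((polyAbs P).eval (n : ℝ) + 1)) :=
    le_trans hQM (le_trans (eval_le_polyAbs Q (by positivity))
      (polyAbs_mono Q (by positivity) hMR))
  calc (Nat.card {g : SemidirectProduct N (Multiplicative ℤ) (zpowersHom (MulAut N) α) |
          wordLength T g ≤ n} : ℝ)
      ≤ ((Nat.card {g : N | wordLength S g ≤ M} * (2 * n + 1) : ℕ) : ℝ) := by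
        exact_mod_cast hcard1
    _ = (Nat.card {g : N | wordLength S g ≤ M} : ℝ) * (2 * (n : ℝ) + 1) := by push_cast; ring
    _ ≤ (polyAbs Q).eval ((n : ℝ) * ((polyAbs P).eval (n : ℝ) + 1)) * (2 * (n : ℝ) + 1) :=
        mul_le_mul_of_nonneg_right hcard2 (by positivity)
    _ = _ := by
        rw [Polynomial.eval_mul, Polynomial.eval_comp]
        simp [Polynomial.eval_mul, Polynomial.eval_add]
end

section
/- Let G₁, G₂ be finitely generated groups, each with the Rapid Decay property. Then the direct product G₁ × G₂ has the Rapid Decay property (with respect to the sum of the word lengths). -/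
open scoped BigOperators

/-- The Rapid Decay property for a group equipped with a length function `L`. -/
def HasRD (G : Type*) [Group G] (L : G → ℝ) : Prop :=
  ∃ P : Polynomial ℝ, ∀ r : ℝ, 0 < r → ∀ f g : G →₀ ℝ,
    (∀ x, 0 ≤ f x) → (∀ x, 0 ≤ g x) → (∀ x ∈ f.support, L x ≤ r) →
    l2norm (conv f g) ≤ P.eval r * l2norm (f : G → ℝ) * l2norm (g : G → ℝ)

section RDhelpers

variable {α : Type*}

lemma RD_tsum_sq_eq (f : α → ℝ) (s : Finset α) (h : ∀ x ∉ s, f x = 0) :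
    ∑' x, f x ^ 2 = ∑ x ∈ s, f x ^ 2 :=
  tsum_eq_sum (fun x hx => by rw [h x hx]; ring)

lemma RD_l2norm_eq (f : α → ℝ) (s : Finset α) (h : ∀ x ∉ s, f x = 0) :
    l2norm f = Real.sqrt (∑ x ∈ s, f x ^ 2) := by
  rw [l2norm, RD_tsum_sq_eq f s h]

lemma RD_l2norm_sq (f : α → ℝ) (s : Finset α) (h : ∀ x ∉ s, f x = 0) :
    l2norm f ^ 2 = ∑ x ∈ s, f x ^ 2 := by
  rw [RD_l2norm_eq f s h]
  exact Real.sq_sqrt (Finset.sum_nonneg fun _ _ => sq_nonneg _)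

lemma RD_l2norm_nonneg (f : α → ℝ) : 0 ≤ l2norm f := Real.sqrt_nonneg _

lemma RD_minkowski_two (t : Finset α) (a b : α → ℝ) :
    Real.sqrt (∑ x ∈ t, (a x + b x) ^ 2) ≤
      Real.sqrt (∑ x ∈ t, a x ^ 2) + Real.sqrt (∑ x ∈ t, b x ^ 2) := by
  rw [Real.sqrt_le_iff]
  refine ⟨by positivity, ?_⟩
  have hcs := Real.sum_mul_le_sqrt_mul_sqrt t a b
  have ha : Real.sqrt (∑ x ∈ t, a x ^ 2) ^ 2 = ∑ x ∈ t, a x ^ 2 :=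
    Real.sq_sqrt (Finset.sum_nonneg fun _ _ => sq_nonneg _)
  have hb : Real.sqrt (∑ x ∈ t, b x ^ 2) ^ 2 = ∑ x ∈ t, b x ^ 2 :=
    Real.sq_sqrt (Finset.sum_nonneg fun _ _ => sq_nonneg _)
  have hexp : ∑ x ∈ t, (a x + b x) ^ 2 =
      ∑ x ∈ t, a x ^ 2 + 2 * ∑ x ∈ t, a x * b x + ∑ x ∈ t, b x ^ 2 := by
    rw [Finset.mul_sum, ← Finset.sum_add_distrib, ← Finset.sum_add_distrib]
    exact Finset.sum_congr rfl fun x _ => by ring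
  rw [hexp, add_sq, ha, hb]
  nlinarith [hcs]

lemma RD_minkowski_sum {ι : Type*} [DecidableEq ι] (s : Finset ι) (t : Finset α)
    (v : ι → α → ℝ) :
    Real.sqrt (∑ x ∈ t, (∑ i ∈ s, v i x) ^ 2) ≤
      ∑ i ∈ s, Real.sqrt (∑ x ∈ t, v i x ^ 2) := by
  induction s using Finset.induction_on with
  | empty => simp
  | insert a s hni ih =>
    simp only [Finset.sum_insert hni]
    calc Real.sqrt (∑ x ∈ t, (v a x + ∑ i ∈ s, v i x) ^ 2)
        ≤ Real.sqrt (∑ x ∈ t, v a x ^ 2) +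
            Real.sqrt (∑ x ∈ t, (∑ i ∈ s, v i x) ^ 2) := RD_minkowski_two t _ _
      _ ≤ _ := add_le_add_right ih _

end RDhelpers

/-- The Rapid Decay property passes to direct products, using the sum of the word
lengths as length function on `G₁ × G₂`. -/
theorem stmt19 {G₁ G₂ : Type*} [Group G₁] [Group G₂]
    (S₁ : Set G₁) (S₂ : Set G₂) (h₁fin : S₁.Finite) (h₂fin : S₂.Finite)
    (h₁gen : Subgroup.closure S₁ = ⊤) (h₂gen : Subgroup.closure S₂ = ⊤)
    (hRD₁ : HasRD G₁ (fun g => (wordLength S₁ g : ℝ)))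
    (hRD₂ : HasRD G₂ (fun g => (wordLength S₂ g : ℝ))) :
    HasRD (G₁ × G₂)
      (fun p => (wordLength S₁ p.1 : ℝ) + (wordLength S₂ p.2 : ℝ)) := by
  classical
  obtain ⟨P₁, hP₁⟩ := hRD₁
  obtain ⟨P₂, hP₂⟩ := hRD₂
  refine ⟨(P₁ ^ 2 + 1) * (P₂ ^ 2 + 1), ?_⟩
  intro r hr f g hf hg hsupp
  set q₁ : ℝ := P₁.eval r ^ 2 + 1 with hq₁def
  set q₂ : ℝ := P₂.eval r ^ 2 + 1 with hq₂def
  have hq₁0 : (0:ℝ) ≤ q₁ := by positivity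
  have hq₂0 : (0:ℝ) ≤ q₂ := by positivity
  have hq₁P : P₁.eval r ≤ q₁ := by nlinarith [sq_nonneg (P₁.eval r - 1)]
  have hq₂P : P₂.eval r ≤ q₂ := by nlinarith [sq_nonneg (P₂.eval r - 1)]
  set A₁ := f.support.image Prod.fst with hA₁def
  set A₂ := f.support.image Prod.snd with hA₂def
  set B₁ := g.support.image Prod.fst with hB₁def
  set B₂ := g.support.image Prod.snd with hB₂def
  set C₁ := Finset.image₂ (· * ·) A₁ B₁ with hC₁def
  set C₂ := Finset.image₂ (· * ·) A₂ B₂ with hC₂def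
  have hfc : ∀ (a : G₁) (b : G₂), f.curry a b = f (a, b) := fun a b => Finsupp.curry_apply f a b
  have hgc : ∀ (a : G₁) (b : G₂), g.curry a b = g (a, b) := fun a b => Finsupp.curry_apply g a b
  have hmemA₁ : ∀ {a : G₁} {b : G₂}, f (a, b) ≠ 0 → a ∈ A₁ := fun h =>
    Finset.mem_image.2 ⟨_, Finsupp.mem_support_iff.2 h, rfl⟩
  have hmemA₂ : ∀ {a : G₁} {b : G₂}, f (a, b) ≠ 0 → b ∈ A₂ := fun h =>
    Finset.mem_image.2 ⟨_, Finsupp.mem_support_iff.2 h, rfl⟩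
  have hmemB₁ : ∀ {a : G₁} {b : G₂}, g (a, b) ≠ 0 → a ∈ B₁ := fun h =>
    Finset.mem_image.2 ⟨_, Finsupp.mem_support_iff.2 h, rfl⟩
  have hmemB₂ : ∀ {a : G₁} {b : G₂}, g (a, b) ≠ 0 → b ∈ B₂ := fun h =>
    Finset.mem_image.2 ⟨_, Finsupp.mem_support_iff.2 h, rfl⟩
  -- slices vanish outside A₂ resp. B₂
  have hcurA₂ : ∀ (a : G₁), ∀ b ∉ A₂, f.curry a b = 0 := by
    intro a b hb
    rw [hfc]; by_contra h; exact hb (hmemA₂ h)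
  have hcurB₂ : ∀ (a : G₁), ∀ b ∉ B₂, g.curry a b = 0 := by
    intro a b hb
    rw [hgc]; by_contra h; exact hb (hmemB₂ h)
  have hfcpos : ∀ (a : G₁) (b : G₂), 0 ≤ f.curry a b := fun a b => by rw [hfc]; exact hf _
  have hgcpos : ∀ (a : G₁) (b : G₂), 0 ≤ g.curry a b := fun a b => by rw [hgc]; exact hg _
  -- the "fiberwise norm" functions
  have hFz : ∀ a ∉ A₁, l2norm (f.curry a : G₂ → ℝ) = 0 := by
    intro a ha
    have h0 : ∀ b, f.curry a b = 0 := by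
      intro b; rw [hfc]; by_contra h; exact ha (hmemA₁ h)
    simp [l2norm, h0]
  have hGz : ∀ a ∉ B₁, l2norm (g.curry a : G₂ → ℝ) = 0 := by
    intro a ha
    have h0 : ∀ b, g.curry a b = 0 := by
      intro b; rw [hgc]; by_contra h; exact ha (hmemB₁ h)
    simp [l2norm, h0]
  set F : G₁ →₀ ℝ := Finsupp.onFinset A₁ (fun a => l2norm (f.curry a : G₂ → ℝ))
    (fun a h => by by_contra ha; exact h (hFz a ha)) with hFdef
  set Gn : G₁ →₀ ℝ := Finsupp.onFinset B₁ (fun a => l2norm (g.curry a : G₂ → ℝ))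
    (fun a h => by by_contra ha; exact h (hGz a ha)) with hGndef
  have hFapp : ∀ a, F a = l2norm (f.curry a : G₂ → ℝ) := fun a => Finsupp.onFinset_apply
  have hGnapp : ∀ a, Gn a = l2norm (g.curry a : G₂ → ℝ) := fun a => Finsupp.onFinset_apply
  have hFnn : ∀ a, 0 ≤ F a := fun a => by rw [hFapp]; exact RD_l2norm_nonneg _
  have hGnnn : ∀ a, 0 ≤ Gn a := fun a => by rw [hGnapp]; exact RD_l2norm_nonneg _
  -- support bound for F
  have hFsupp : ∀ x ∈ F.support, ((wordLength S₁ x : ℝ)) ≤ r := by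
    intro x hx
    have hxA : x ∈ A₁ := Finsupp.support_onFinset_subset hx
    obtain ⟨p, hp, hpe⟩ := Finset.mem_image.1 hxA
    have h1 := hsupp p hp
    have h2 : (0:ℝ) ≤ (wordLength S₂ p.2 : ℝ) := Nat.cast_nonneg _
    rw [← hpe]
    simp only at h1
    linarith
  -- RD on slices
  have hslice : ∀ (a c : G₁),
      l2norm (conv (f.curry a) (g.curry c)) ≤ q₂ * (F a * Gn c) := by
    intro a c
    have hsup : ∀ x ∈ (f.curry a).support, ((wordLength S₂ x : ℝ)) ≤ r := by
      intro x hx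
      have h1 : f (a, x) ≠ 0 := by rw [← hfc]; exact Finsupp.mem_support_iff.1 hx
      have h2 := hsupp (a, x) (Finsupp.mem_support_iff.2 h1)
      have h3 : (0:ℝ) ≤ (wordLength S₁ a : ℝ) := Nat.cast_nonneg _
      simp only at h2
      linarith
    have h := hP₂ r hr (f.curry a) (g.curry c) (hfcpos a) (hgcpos c) hsup
    have h2 : P₂.eval r * l2norm (f.curry a : G₂ → ℝ) * l2norm (g.curry c : G₂ → ℝ) ≤
        q₂ * (F a * Gn c) := by
      rw [hFapp, hGnapp, ← mul_assoc]
      exact mul_le_mul_of_nonneg_right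
        (mul_le_mul_of_nonneg_right hq₂P (RD_l2norm_nonneg _)) (RD_l2norm_nonneg _)
    exact h.trans h2
  -- decomposition of the product convolution
  have hsubf : f.support ⊆ A₁ ×ˢ A₂ := by
    intro p hp
    exact Finset.mem_product.2 ⟨Finset.mem_image_of_mem _ hp, Finset.mem_image_of_mem _ hp⟩
  have hdecomp : ∀ (γ₁ : G₁) (γ₂ : G₂), conv f g (γ₁, γ₂) =
      ∑ a ∈ A₁, conv (f.curry a) (g.curry (a⁻¹ * γ₁)) γ₂ := by
    intro γ₁ γ₂
    simp only [conv]
    rw [Finset.sum_subset hsubf (fun x _ hx => by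
      rw [Finsupp.notMem_support_iff.1 hx, zero_mul])]
    rw [Finset.sum_product]
    refine Finset.sum_congr rfl fun a _ => ?_
    have hsub2 : (f.curry a).support ⊆ A₂ := by
      intro b hb
      have : f (a, b) ≠ 0 := by rw [← hfc]; exact Finsupp.mem_support_iff.1 hb
      exact hmemA₂ this
    rw [Finset.sum_subset hsub2 (fun x _ hx => by
      rw [Finsupp.notMem_support_iff.1 hx, zero_mul])]
    refine Finset.sum_congr rfl fun b _ => ?_
    rw [hfc, hgc]
    rfl
  -- vanishing of convolutions outside the product of balls
  have hvan : ∀ γ ∉ C₁ ×ˢ C₂, conv f g γ = 0 := by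
    intro γ hγ
    apply Finset.sum_eq_zero
    intro μ hμ
    by_cases hz : g (μ⁻¹ * γ) = 0
    · rw [hz, mul_zero]
    · exfalso
      apply hγ
      have hμg : μ⁻¹ * γ ∈ g.support := Finsupp.mem_support_iff.2 hz
      refine Finset.mem_product.2 ⟨?_, ?_⟩
      · exact Finset.mem_image₂.2 ⟨μ.1, Finset.mem_image_of_mem _ hμ,
          (μ⁻¹ * γ).1, Finset.mem_image_of_mem _ hμg, by
            show μ.1 * (μ.1⁻¹ * γ.1) = γ.1; group⟩
      · exact Finset.mem_image₂.2 ⟨μ.2, Finset.mem_image_of_mem _ hμ,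
          (μ⁻¹ * γ).2, Finset.mem_image_of_mem _ hμg, by
            show μ.2 * (μ.2⁻¹ * γ.2) = γ.2; group⟩
  have hvan2 : ∀ (a c : G₁), ∀ γ₂ ∉ C₂, conv (f.curry a) (g.curry c) γ₂ = 0 := by
    intro a c γ₂ h
    apply Finset.sum_eq_zero
    intro b hb
    by_cases hz : g.curry c (b⁻¹ * γ₂) = 0
    · rw [hz, mul_zero]
    · exfalso
      apply h
      have hb2 : b ∈ A₂ := by
        have : f (a, b) ≠ 0 := by rw [← hfc]; exact Finsupp.mem_support_iff.1 hb
        exact hmemA₂ this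
      have hc2 : b⁻¹ * γ₂ ∈ B₂ := by
        have : g (c, b⁻¹ * γ₂) ≠ 0 := by rw [← hgc]; exact hz
        exact hmemB₂ this
      exact Finset.mem_image₂.2 ⟨b, hb2, b⁻¹ * γ₂, hc2, mul_inv_cancel_left b γ₂⟩
  have hvan1 : ∀ γ₁ ∉ C₁, conv F Gn γ₁ = 0 := by
    intro γ₁ h
    apply Finset.sum_eq_zero
    intro μ hμ
    by_cases hz : Gn (μ⁻¹ * γ₁) = 0
    · rw [hz, mul_zero]
    · exfalso
      apply h
      have hμ1 : μ ∈ A₁ := Finsupp.support_onFinset_subset hμ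
      have hν1 : μ⁻¹ * γ₁ ∈ B₁ := Finsupp.support_onFinset_subset
        (Finsupp.mem_support_iff.2 hz)
      exact Finset.mem_image₂.2 ⟨μ, hμ1, μ⁻¹ * γ₁, hν1, mul_inv_cancel_left μ γ₁⟩
  have hconvF : ∀ γ₁, conv F Gn γ₁ = ∑ a ∈ A₁, F a * Gn (a⁻¹ * γ₁) := by
    intro γ₁
    exact Finset.sum_subset Finsupp.support_onFinset_subset (fun x _ hx => by
      rw [Finsupp.notMem_support_iff.1 hx, zero_mul])
  -- pointwise bound
  have hpt : ∀ γ₁, Real.sqrt (∑ γ₂ ∈ C₂, conv f g (γ₁, γ₂) ^ 2) ≤ q₂ * conv F Gn γ₁ := by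
    intro γ₁
    calc Real.sqrt (∑ γ₂ ∈ C₂, conv f g (γ₁, γ₂) ^ 2)
        = Real.sqrt (∑ γ₂ ∈ C₂,
            (∑ a ∈ A₁, conv (f.curry a) (g.curry (a⁻¹ * γ₁)) γ₂) ^ 2) := by
          congr 1
          exact Finset.sum_congr rfl fun γ₂ _ => by rw [hdecomp]
      _ ≤ ∑ a ∈ A₁, Real.sqrt (∑ γ₂ ∈ C₂,
            conv (f.curry a) (g.curry (a⁻¹ * γ₁)) γ₂ ^ 2) := RD_minkowski_sum _ _ _
      _ = ∑ a ∈ A₁, l2norm (conv (f.curry a) (g.curry (a⁻¹ * γ₁))) := by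
          refine Finset.sum_congr rfl fun a _ => ?_
          rw [RD_l2norm_eq _ C₂ (fun x hx => hvan2 a _ x hx)]
      _ ≤ ∑ a ∈ A₁, q₂ * (F a * Gn (a⁻¹ * γ₁)) :=
          Finset.sum_le_sum fun a _ => hslice a (a⁻¹ * γ₁)
      _ = q₂ * conv F Gn γ₁ := by rw [← Finset.mul_sum, hconvF]
  have hconvFnn : ∀ γ₁, 0 ≤ conv F Gn γ₁ := by
    intro γ₁
    exact Finset.sum_nonneg fun μ _ => mul_nonneg (hFnn μ) (hGnnn _)
  -- square of the norm of conv f g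
  have hN2 : l2norm (conv f g) ^ 2 = ∑ γ₁ ∈ C₁, ∑ γ₂ ∈ C₂, conv f g (γ₁, γ₂) ^ 2 := by
    rw [RD_l2norm_sq _ (C₁ ×ˢ C₂) hvan, Finset.sum_product]
  have hstep2 : l2norm (conv f g) ^ 2 ≤ q₂ ^ 2 * l2norm (conv F Gn) ^ 2 := by
    rw [hN2, RD_l2norm_sq (conv F Gn) C₁ hvan1, Finset.mul_sum]
    refine Finset.sum_le_sum fun γ₁ _ => ?_
    have h1 : ∑ γ₂ ∈ C₂, conv f g (γ₁, γ₂) ^ 2 =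
        Real.sqrt (∑ γ₂ ∈ C₂, conv f g (γ₁, γ₂) ^ 2) ^ 2 :=
      (Real.sq_sqrt (Finset.sum_nonneg fun _ _ => sq_nonneg _)).symm
    rw [h1]
    calc Real.sqrt (∑ γ₂ ∈ C₂, conv f g (γ₁, γ₂) ^ 2) ^ 2
        ≤ (q₂ * conv F Gn γ₁) ^ 2 := pow_le_pow_left₀ (Real.sqrt_nonneg _) (hpt γ₁) 2
      _ = q₂ ^ 2 * conv F Gn γ₁ ^ 2 := by ring
  -- RD on the first factor
  have hFG : l2norm (conv F Gn) ≤ q₁ * l2norm (F : G₁ → ℝ) * l2norm (Gn : G₁ → ℝ) := by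
    have h := hP₁ r hr F Gn hFnn hGnnn hFsupp
    refine h.trans ?_
    exact mul_le_mul_of_nonneg_right
      (mul_le_mul_of_nonneg_right hq₁P (RD_l2norm_nonneg _)) (RD_l2norm_nonneg _)
  -- identification of norms
  have hFout : ∀ a ∉ A₁, F a = 0 := fun a ha => by rw [hFapp]; exact hFz a ha
  have hGout : ∀ a ∉ B₁, Gn a = 0 := fun a ha => by rw [hGnapp]; exact hGz a ha
  have hfout : ∀ p ∉ A₁ ×ˢ A₂, f p = 0 := by
    intro p hp
    by_contra h
    exact hp (hsubf (Finsupp.mem_support_iff.2 h))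
  have hgout : ∀ p ∉ B₁ ×ˢ B₂, g p = 0 := by
    intro p hp
    by_contra h
    refine hp (Finset.mem_product.2 ⟨Finset.mem_image_of_mem _ ?_, Finset.mem_image_of_mem _ ?_⟩) <;>
      exact Finsupp.mem_support_iff.2 h
  have hFf : l2norm (F : G₁ → ℝ) ^ 2 = l2norm (f : G₁ × G₂ → ℝ) ^ 2 := by
    rw [RD_l2norm_sq (F : G₁ → ℝ) A₁ hFout, RD_l2norm_sq (f : G₁ × G₂ → ℝ) (A₁ ×ˢ A₂) hfout,
      Finset.sum_product]
    refine Finset.sum_congr rfl fun a _ => ?_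
    rw [hFapp, RD_l2norm_sq (f.curry a : G₂ → ℝ) A₂ (hcurA₂ a)]
    exact Finset.sum_congr rfl fun b _ => by rw [hfc]
  have hGg : l2norm (Gn : G₁ → ℝ) ^ 2 = l2norm (g : G₁ × G₂ → ℝ) ^ 2 := by
    rw [RD_l2norm_sq (Gn : G₁ → ℝ) B₁ hGout, RD_l2norm_sq (g : G₁ × G₂ → ℝ) (B₁ ×ˢ B₂) hgout,
      Finset.sum_product]
    refine Finset.sum_congr rfl fun a _ => ?_
    rw [hGnapp, RD_l2norm_sq (g.curry a : G₂ → ℝ) B₂ (hcurB₂ a)]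
    exact Finset.sum_congr rfl fun b _ => by rw [hgc]
  -- put everything together
  have hsq : l2norm (conv f g) ^ 2 ≤
      (q₁ * q₂ * l2norm (f : G₁ × G₂ → ℝ) * l2norm (g : G₁ × G₂ → ℝ)) ^ 2 := by
    calc l2norm (conv f g) ^ 2
        ≤ q₂ ^ 2 * l2norm (conv F Gn) ^ 2 := hstep2
      _ ≤ q₂ ^ 2 * (q₁ * l2norm (F : G₁ → ℝ) * l2norm (Gn : G₁ → ℝ)) ^ 2 := by
          refine mul_le_mul_of_nonneg_left ?_ (sq_nonneg q₂)
          exact pow_le_pow_left₀ (RD_l2norm_nonneg _) hFG 2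
      _ = q₂ ^ 2 * (q₁ ^ 2 * l2norm (F : G₁ → ℝ) ^ 2 * l2norm (Gn : G₁ → ℝ) ^ 2) := by ring
      _ = (q₁ * q₂ * l2norm (f : G₁ × G₂ → ℝ) * l2norm (g : G₁ × G₂ → ℝ)) ^ 2 := by
          rw [hFf, hGg]; ring
  have hM0 : 0 ≤ q₁ * q₂ * l2norm (f : G₁ × G₂ → ℝ) * l2norm (g : G₁ × G₂ → ℝ) :=
    mul_nonneg (mul_nonneg (mul_nonneg hq₁0 hq₂0) (RD_l2norm_nonneg _)) (RD_l2norm_nonneg _)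
  have hfinal : l2norm (conv f g) ≤
      q₁ * q₂ * l2norm (f : G₁ × G₂ → ℝ) * l2norm (g : G₁ × G₂ → ℝ) := by
    have h1 : l2norm (conv f g) = Real.sqrt (l2norm (conv f g) ^ 2) :=
      (Real.sqrt_sq (RD_l2norm_nonneg _)).symm
    rw [h1]
    calc Real.sqrt (l2norm (conv f g) ^ 2)
        ≤ Real.sqrt ((q₁ * q₂ * l2norm (f : G₁ × G₂ → ℝ) * l2norm (g : G₁ × G₂ → ℝ)) ^ 2) :=
          Real.sqrt_le_sqrt hsq
      _ = _ := Real.sqrt_sq hM0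
  have heval : Polynomial.eval r ((P₁ ^ 2 + 1) * (P₂ ^ 2 + 1)) = q₁ * q₂ := by
    simp [hq₁def, hq₂def]
  rw [heval]
  calc l2norm (conv f g) ≤ _ := hfinal
    _ = q₁ * q₂ * l2norm (f : G₁ × G₂ → ℝ) * l2norm (g : G₁ × G₂ → ℝ) := rfl
end
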